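/- Let 0 < α < 1 and let φ : ℝ^L → ℝ^L be continuous and K-Lipschitz componentwise (in the ℓ¹ sense) with K > 0. Let x, y : [0,T] → ℝ^L be continuous solutions of the Volterra equations x(t) = x₀ + (1/Γ(α)) ∫_0^t (t−s)^{α−1} φ(x(s)) ds and y(t) = y₀ + (1/Γ(α)) ∫_0^t (t−s)^{α−1} φ(y(s)) ds with initial values x₀, y₀ ∈ ℝ^L. If N > 0 satisfies L·K < N^{α}, then ‖x − y‖* ≤ (1 − L·K/N^{α})^{−1} · Σ_{k=1}^{L} |(x₀)_k − (y₀)_k|. -/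

import Mathlib

open scoped BigOperators
open MeasureTheory Set

lemma gamma_tail_bound {α N t : ℝ} (hα : 0 < α) (hN : 0 < N) (ht : 0 ≤ t) :
    ∫ u in (0:ℝ)..t, u ^ (α - 1) * Real.exp (-(N * u)) ≤ Real.Gamma α / N ^ α := by
  have hint : IntegrableOn (fun u : ℝ => u ^ (α - 1) * Real.exp (-(N * u))) (Ioi 0) := by
    have := integrableOn_rpow_mul_exp_neg_mul_rpow (p := 1) (s := α - 1) (b := N)
      (by linarith) zero_lt_one hN
    refine this.congr_fun (fun u hu => ?_) measurableSet_Ioi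
    dsimp only
    rw [Real.rpow_one, neg_mul]
  rw [intervalIntegral.integral_of_le ht]
  have h1 : ∫ u in Set.Ioc 0 t, u ^ (α - 1) * Real.exp (-(N * u))
      ≤ ∫ u in Set.Ioi 0, u ^ (α - 1) * Real.exp (-(N * u)) := by
    refine setIntegral_mono_set hint ?_ ?_
    · filter_upwards [self_mem_ae_restrict measurableSet_Ioi] with u hu
      have : (0:ℝ) < u := hu
      positivity
    · exact (Set.Ioc_subset_Ioi_self).eventuallyLE
  have h2 := Real.integral_rpow_mul_exp_neg_mul_Ioi hα hN
  rw [h2] at h1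
  calc _ ≤ (1 / N) ^ α * Real.Gamma α := h1
    _ = Real.Gamma α / N ^ α := by
        rw [Real.div_rpow (by norm_num) hN.le, Real.one_rpow]
        ring

/-- For `0 < α < 1` and `φ` continuous and `K`-Lipschitz componentwise with
`K > 0`, if `x, y : [0,T] → ℝ^L` are continuous solutions of the Volterra equations with
initial values `x₀, y₀`, and `N > 0` satisfies `L·K < N^α`, then
`‖x − y‖* ≤ (1 − L·K/N^α)⁻¹ · ∑_k |(x₀)_k − (y₀)_k|`. -/
theorem volterra_solutions_weighted_stability_estimate
    (T : ℝ) (hT : 0 < T) (L : ℕ) (hL : 1 ≤ L) (α : ℝ) (hα : 0 < α) (hα1 : α < 1)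
    (K : ℝ) (hK : 0 < K)
    (φ : (Fin L → ℝ) → (Fin L → ℝ)) (hφc : Continuous φ)
    (hφ : ∀ (k : Fin L) (u v : Fin L → ℝ), |φ u k - φ v k| ≤ K * ∑ j : Fin L, |u j - v j|)
    (x₀ y₀ : Fin L → ℝ)
    (x y : ℝ → Fin L → ℝ)
    (hx : ContinuousOn x (Set.Icc 0 T)) (hy : ContinuousOn y (Set.Icc 0 T))
    (hxsol : ∀ t ∈ Set.Icc (0:ℝ) T, ∀ k : Fin L,
      x t k = x₀ k + (1 / Real.Gamma α) * ∫ s in (0:ℝ)..t, (t - s) ^ (α - 1) * φ (x s) k)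
    (hysol : ∀ t ∈ Set.Icc (0:ℝ) T, ∀ k : Fin L,
      y t k = y₀ k + (1 / Real.Gamma α) * ∫ s in (0:ℝ)..t, (t - s) ^ (α - 1) * φ (y s) k)
    (N : ℝ) (hN : 0 < N) (hNK : (L : ℝ) * K < N ^ α) :
    (∑ k : Fin L, ⨆ t : Set.Icc (0:ℝ) T, Real.exp (-N * (t : ℝ)) * |x t k - y t k|)
      ≤ (1 - (L : ℝ) * K / N ^ α)⁻¹ * ∑ k : Fin L, |x₀ k - y₀ k| := by
  have hne : Nonempty (Set.Icc (0:ℝ) T) := ⟨⟨0, le_rfl, hT.le⟩⟩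
  have hΓ : 0 < Real.Gamma α := Real.Gamma_pos_of_pos hα
  have hNα : 0 < N ^ α := Real.rpow_pos_of_pos hN α
  set g : Fin L → ℝ :=
    fun k => ⨆ t : Set.Icc (0:ℝ) T, Real.exp (-N * (t : ℝ)) * |x t k - y t k| with hg
  set M : ℝ := ∑ k : Fin L, g k with hM
  -- boundedness of the sup families
  have bdd : ∀ k : Fin L, BddAbove (Set.range
      fun t : Set.Icc (0:ℝ) T => Real.exp (-N * (t : ℝ)) * |x t k - y t k|) := by
    intro k
    have hc : ContinuousOn (fun t : ℝ => Real.exp (-N * t) * |x t k - y t k|)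
        (Set.Icc 0 T) := by
      apply ContinuousOn.mul
      · exact (Real.continuous_exp.comp (continuous_const.mul continuous_id)).continuousOn
      · exact (((continuous_apply k).comp_continuousOn hx).sub
          ((continuous_apply k).comp_continuousOn hy)).abs
    refine BddAbove.mono ?_ (isCompact_Icc.image_of_continuousOn hc).bddAbove
    rintro _ ⟨t, rfl⟩
    exact ⟨t, t.2, rfl⟩
  have gnonneg : ∀ k : Fin L, 0 ≤ g k := by
    intro k
    refine le_trans ?_ (le_ciSup (bdd k) ⟨0, le_rfl, hT.le⟩)
    positivity
  have Mnonneg : 0 ≤ M := Finset.sum_nonneg fun k _ => gnonneg k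
  -- pointwise bound from the sup
  have hpt : ∀ s ∈ Set.Icc (0:ℝ) T, ∀ j : Fin L,
      |x s j - y s j| ≤ Real.exp (N * s) * g j := by
    intro s hs j
    have h : Real.exp (-N * s) * |x s j - y s j| ≤ g j :=
      le_ciSup (bdd j) (⟨s, hs⟩ : Set.Icc (0:ℝ) T)
    have hid : Real.exp (N * s) * Real.exp (-N * s) = 1 := by
      rw [← Real.exp_add]; simp
    have h2 := mul_le_mul_of_nonneg_left h (Real.exp_pos (N * s)).le
    rw [← mul_assoc, hid, one_mul] at h2
    exact h2
  have hsum : ∀ s ∈ Set.Icc (0:ℝ) T,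
      ∑ j : Fin L, |x s j - y s j| ≤ Real.exp (N * s) * M := by
    intro s hs
    rw [hM, Finset.mul_sum]
    exact Finset.sum_le_sum fun j _ => hpt s hs j
  -- the key estimate
  have hkey : ∀ t ∈ Set.Icc (0:ℝ) T, ∀ k : Fin L,
      Real.exp (-N * t) * |x t k - y t k| ≤ |x₀ k - y₀ k| + K * M / N ^ α := by
    intro t ht k
    obtain ⟨ht0, htT⟩ := ht
    have hαm : (-1:ℝ) < α - 1 := by linarith
    have hpow : IntervalIntegrable (fun s => (t - s) ^ (α - 1)) volume 0 t := by
      have := ((intervalIntegral.intervalIntegrable_rpow' (a := 0) (b := t) hαm).comp_sub_left t).symm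
      simpa using this
    have hsubI : Set.uIcc (0:ℝ) t ⊆ Set.Icc 0 T := by
      rw [Set.uIcc_of_le ht0]; exact Set.Icc_subset_Icc le_rfl htT
    have hxc : ContinuousOn (fun s => φ (x s) k) (Set.uIcc 0 t) :=
      ((continuous_apply k).comp hφc).comp_continuousOn (hx.mono hsubI)
    have hyc : ContinuousOn (fun s => φ (y s) k) (Set.uIcc 0 t) :=
      ((continuous_apply k).comp hφc).comp_continuousOn (hy.mono hsubI)
    have hfx : IntervalIntegrable (fun s => (t - s) ^ (α - 1) * φ (x s) k) volume 0 t :=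
      hpow.mul_continuousOn hxc
    have hfy : IntervalIntegrable (fun s => (t - s) ^ (α - 1) * φ (y s) k) volume 0 t :=
      hpow.mul_continuousOn hyc
    have hd : IntervalIntegrable
        (fun s => (t - s) ^ (α - 1) * (φ (x s) k - φ (y s) k)) volume 0 t :=
      hpow.mul_continuousOn (hxc.sub hyc)
    have heq : x t k - y t k = (x₀ k - y₀ k) + (1 / Real.Gamma α) *
        ∫ s in (0:ℝ)..t, (t - s) ^ (α - 1) * (φ (x s) k - φ (y s) k) := by
      rw [hxsol t ⟨ht0, htT⟩ k, hysol t ⟨ht0, htT⟩ k]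
      have hsplit : (∫ s in (0:ℝ)..t, (t - s) ^ (α - 1) * (φ (x s) k - φ (y s) k))
          = (∫ s in (0:ℝ)..t, (t - s) ^ (α - 1) * φ (x s) k)
            - ∫ s in (0:ℝ)..t, (t - s) ^ (α - 1) * φ (y s) k := by
        rw [← intervalIntegral.integral_sub hfx hfy]
        congr 1; funext s; ring
      rw [hsplit]; ring
    set J := ∫ s in (0:ℝ)..t, (t - s) ^ (α - 1) * (φ (x s) k - φ (y s) k) with hJdef
    have hbdint : IntervalIntegrable
        (fun s => (t - s) ^ (α - 1) * (K * (Real.exp (N * s) * M))) volume 0 t := by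
      apply hpow.mul_continuousOn
      fun_prop
    have hJ : |J| ≤ ∫ s in (0:ℝ)..t, (t - s) ^ (α - 1) * (K * (Real.exp (N * s) * M)) := by
      calc |J| ≤ ∫ s in (0:ℝ)..t, |(t - s) ^ (α - 1) * (φ (x s) k - φ (y s) k)| :=
          intervalIntegral.abs_integral_le_integral_abs ht0
        _ ≤ _ := by
          apply intervalIntegral.integral_mono_on ht0 hd.abs hbdint
          intro s hs
          obtain ⟨hs0, hst⟩ := hs
          have hts : (0:ℝ) ≤ t - s := by linarith
          have hpnn : 0 ≤ (t - s) ^ (α - 1) := Real.rpow_nonneg hts _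
          rw [abs_mul, abs_of_nonneg hpnn]
          apply mul_le_mul_of_nonneg_left _ hpnn
          calc |φ (x s) k - φ (y s) k| ≤ K * ∑ j : Fin L, |x s j - y s j| := hφ k _ _
            _ ≤ K * (Real.exp (N * s) * M) :=
              mul_le_mul_of_nonneg_left (hsum s ⟨hs0, hst.trans htT⟩) hK.le
    have hcomp : (∫ s in (0:ℝ)..t, (t - s) ^ (α - 1) * (K * (Real.exp (N * s) * M)))
        = K * M * Real.exp (N * t) * ∫ u in (0:ℝ)..t, u ^ (α - 1) * Real.exp (-(N * u)) := by
      have hcong : ∀ s : ℝ, (t - s) ^ (α - 1) * (K * (Real.exp (N * s) * M))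
          = (fun u : ℝ => K * M * Real.exp (N * t) * (u ^ (α - 1) * Real.exp (-(N * u))))
            (t - s) := by
        intro s
        have he : Real.exp (N * s) = Real.exp (N * t) * Real.exp (-(N * (t - s))) := by
          rw [← Real.exp_add]; congr 1; ring
        simp only
        rw [he]; ring
      rw [intervalIntegral.integral_congr (fun s _ => hcong s),
        intervalIntegral.integral_comp_sub_left
          (fun u : ℝ => K * M * Real.exp (N * t) * (u ^ (α - 1) * Real.exp (-(N * u)))) t]
      simp only [sub_self, sub_zero]
      rw [intervalIntegral.integral_const_mul]
    have hgam := gamma_tail_bound hα hN ht0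
    have hJ2 : |J| ≤ K * M * Real.exp (N * t) * (Real.Gamma α / N ^ α) := by
      rw [hcomp] at hJ
      refine hJ.trans ?_
      apply mul_le_mul_of_nonneg_left hgam
      positivity
    have habs : |x t k - y t k|
        ≤ |x₀ k - y₀ k| + K * M / N ^ α * Real.exp (N * t) := by
      have hc2 : (1 / Real.Gamma α) * (K * M * Real.exp (N * t) * (Real.Gamma α / N ^ α))
          = K * M / N ^ α * Real.exp (N * t) := by
        field_simp
      calc |x t k - y t k| = |(x₀ k - y₀ k) + (1 / Real.Gamma α) * J| := by rw [heq]
        _ ≤ |x₀ k - y₀ k| + |(1 / Real.Gamma α) * J| := abs_add_le _ _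
        _ = |x₀ k - y₀ k| + (1 / Real.Gamma α) * |J| := by
            rw [abs_mul, abs_of_nonneg (le_of_lt (one_div_pos.mpr hΓ))]
        _ ≤ |x₀ k - y₀ k| + (1 / Real.Gamma α) *
            (K * M * Real.exp (N * t) * (Real.Gamma α / N ^ α)) := by
            have := mul_le_mul_of_nonneg_left hJ2 (le_of_lt (one_div_pos.mpr hΓ))
            linarith
        _ = |x₀ k - y₀ k| + K * M / N ^ α * Real.exp (N * t) := by rw [hc2]
    have hexple : Real.exp (-N * t) ≤ 1 := by
      apply Real.exp_le_one_iff.mpr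
      nlinarith
    have hprod : Real.exp (-N * t) * Real.exp (N * t) = 1 := by
      rw [← Real.exp_add]; simp
    calc Real.exp (-N * t) * |x t k - y t k|
        ≤ Real.exp (-N * t) * (|x₀ k - y₀ k| + K * M / N ^ α * Real.exp (N * t)) :=
          mul_le_mul_of_nonneg_left habs (Real.exp_pos _).le
      _ = Real.exp (-N * t) * |x₀ k - y₀ k|
          + K * M / N ^ α * (Real.exp (-N * t) * Real.exp (N * t)) := by ring
      _ = Real.exp (-N * t) * |x₀ k - y₀ k| + K * M / N ^ α := by rw [hprod, mul_one]
      _ ≤ |x₀ k - y₀ k| + K * M / N ^ α := by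
          nlinarith [abs_nonneg (x₀ k - y₀ k), Real.exp_pos (-N * t)]
  -- sup bound per component
  have hgk : ∀ k : Fin L, g k ≤ |x₀ k - y₀ k| + K * M / N ^ α := by
    intro k
    apply ciSup_le
    rintro ⟨t, ht⟩
    exact hkey t ht k
  -- sum up
  have hMle : M ≤ (∑ k : Fin L, |x₀ k - y₀ k|) + (L : ℝ) * (K * M / N ^ α) := by
    have h1 : M ≤ ∑ k : Fin L, (|x₀ k - y₀ k| + K * M / N ^ α) :=
      Finset.sum_le_sum fun k _ => hgk k
    rwa [Finset.sum_add_distrib, Finset.sum_const, Finset.card_univ, Fintype.card_fin,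
      nsmul_eq_mul] at h1
  set S : ℝ := ∑ k : Fin L, |x₀ k - y₀ k| with hS
  have hSnn : 0 ≤ S := Finset.sum_nonneg fun k _ => abs_nonneg _
  set c : ℝ := (L : ℝ) * K / N ^ α with hc
  have hc0 : 0 ≤ c := by positivity
  have hc1 : c < 1 := (div_lt_one hNα).mpr hNK
  have h1c : 0 < 1 - c := by linarith
  have hMc : M ≤ S + c * M := by
    have heqc : (L : ℝ) * (K * M / N ^ α) = c * M := by rw [hc]; ring
    linarith [hMle]
  have hfin : (1 - c) * M ≤ S := by nlinarith
  calc M = (1 - c)⁻¹ * ((1 - c) * M) := by field_simp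
    _ ≤ (1 - c)⁻¹ * S := mul_le_mul_of_nonneg_left hfin (inv_nonneg.mpr h1c.le)
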